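/- Let n ≥ 2 and let G be a saturated tropical curve in the interior K° of the standard n-simplex K ⊂ ℝ^n, of degree d. Suppose that for each i ∈ {1, …, n} we are given d paths P_{i1}, …, P_{id} of direction i in G (each a chain of segments of edges of G in which consecutive segments share an endpoint and whose union has injective projection to the i-th coordinate) such that every edge e of G with w_e^i ≠ 0 is traversed by at least one of P_{i1}, …, P_{id}. For a path P of direction i, let V_0(P) be the set of vertices Q of G lying on P for which there exists an edge e(Q) of G having Q as an endpoint, not contained in P, whose weight has nonzero j-th component for some j ≠ i. Then every vertex of G belongs to V_0(P_{ik}) for some i ∈ {1, …, n−1} and k ∈ {1, …, d}. -/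

import Mathlib

open Set MeasureTheory
open scoped ENNReal NNReal Classical

noncomputable section

/-- Euclidean space `ℝ^n`. -/
abbrev Euc (n : ℕ) := EuclideanSpace ℝ (Fin n)

/-- The real vector in `ℝ^n` corresponding to an integer vector. -/
def intVec {n : ℕ} (w : Fin n → ℤ) : Euc n := WithLp.toLp 2 (fun i => (w i : ℝ))

/-- An edge of a tropical curve: its carrier set, its set of endpoints (lying in the
ambient open set), and a chosen integer representative of its weight
(the weight is really the class of `weight` up to sign). -/
structure TropEdge (n : ℕ) where
  carrier : Set (Euc n)
  ends : Finset (Euc n)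
  weight : Fin n → ℤ

namespace TropEdge

/-- The real vector corresponding to the chosen representative of the weight. -/
def wR {n : ℕ} (e : TropEdge n) : Euc n := intVec e.weight

/-- The multiplicity of an edge: the natural number `|k|` such that the weight is
`k` times a primitive integral vector, i.e. the gcd of its components. -/
def mult {n : ℕ} (e : TropEdge n) : ℕ :=
  Finset.univ.gcd fun i => (e.weight i).natAbs

end TropEdge

/-- The half-open segment/ray `{v + t • u : 0 ≤ t < T}`, where `T ∈ (0, ∞]`. -/
def rayTo {n : ℕ} (v u : Euc n) (T : ℝ≥0∞) : Set (Euc n) :=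
  {x | ∃ t : ℝ, 0 ≤ t ∧ ENNReal.ofReal t < T ∧ x = v + t • u}

/-- A tropical curve in an open subset `U ⊆ ℝ^n`: a finite vertex set, a finite edge
set, each edge an internal edge (a closed segment contained in `U` with two distinct
vertices as endpoints) or an unbounded edge (`{v + t • u : 0 ≤ t < T} ∩ U` whose
closure is not contained in `U`), with weights parallel to the edge directions;
distinct edges meet only in common vertices, every vertex lies on at least three
edges, and the balancing condition holds at every vertex. -/
structure TropicalCurve (n : ℕ) (U : Set (Euc n)) : Type where
  verts : Finset (Euc n)
  edges : Finset (TropEdge n)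
  verts_mem : ∀ v ∈ verts, v ∈ U
  weight_ne : ∀ e ∈ edges, e.weight ≠ 0
  edge_shape : ∀ e ∈ edges,
    (∃ a ∈ verts, ∃ b ∈ verts, a ≠ b ∧ e.ends = {a, b} ∧
      e.carrier = segment ℝ a b ∧ segment ℝ a b ⊆ U ∧
      ∃ c : ℝ, c ≠ 0 ∧ b - a = c • e.wR) ∨
    (∃ v ∈ verts, ∃ u : Euc n, u ≠ 0 ∧ ∃ T : ℝ≥0∞, 0 < T ∧
      e.ends = {v} ∧ e.carrier = rayTo v u T ∩ U ∧
      ¬ closure (rayTo v u T ∩ U) ⊆ U ∧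
      ∃ c : ℝ, c ≠ 0 ∧ u = c • e.wR)
  edges_meet : ∀ e ∈ edges, ∀ f ∈ edges, e ≠ f →
    ∀ x ∈ e.carrier ∩ f.carrier, x ∈ verts
  three_valent : ∀ v ∈ verts, 3 ≤ (edges.filter fun e => v ∈ e.ends).card
  balanced : ∀ v ∈ verts, ∃ ε : TropEdge n → ℤ,
    (∀ e ∈ edges, v ∈ e.ends →
      (ε e = 1 ∨ ε e = -1) ∧
      ∃ δ : ℝ, 0 < δ ∧ ∀ t : ℝ, 0 < t → t < δ →
        v + (t * (ε e : ℝ)) • e.wR ∈ e.carrier) ∧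
    ∑ e ∈ edges.filter (fun e => v ∈ e.ends), ε e • e.weight = 0

namespace TropicalCurve

variable {n : ℕ} {U : Set (Euc n)}

/-- The underlying set of a tropical curve: the union of the carriers of its edges. -/
def support (G : TropicalCurve n U) : Set (Euc n) :=
  ⋃ e ∈ G.edges, e.carrier

/-- The tropical area of the part of `G` lying in `W`:
`∑_e length(e ∩ W) · ‖w_e‖` (computed with the one-dimensional Hausdorff measure,
with values in `[0, ∞]`). -/
def areaOn (G : TropicalCurve n U) (W : Set (Euc n)) : ℝ≥0∞ :=
  ∑ e ∈ G.edges, μH[1] (e.carrier ∩ W) * (‖e.wR‖₊ : ℝ≥0∞)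

/-- The tropical area of `G`: `∑_e length(e) · ‖w_e‖`. -/
def area (G : TropicalCurve n U) : ℝ≥0∞ :=
  ∑ e ∈ G.edges, μH[1] e.carrier * (‖e.wR‖₊ : ℝ≥0∞)

end TropicalCurve

/-- The standard `n`-simplex: the convex hull of `0` and the standard basis vectors. -/
def stdSimp (n : ℕ) : Set (Euc n) :=
  convexHull ℝ (insert (0 : Euc n) {x | ∃ i : Fin n, x = EuclideanSpace.single i (1 : ℝ)})

/-- The `n+1` facets of the standard simplex: for `i < n` the facet in `{x_i = 0}`,
and for `i = n` the facet in `{x_1 + ⋯ + x_n = 1}`. -/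
def sFacet (n : ℕ) (i : Fin (n + 1)) : Set (Euc n) :=
  if h : (i : ℕ) < n then stdSimp n ∩ {x | x ⟨i, h⟩ = 0}
  else stdSimp n ∩ {x | ∑ j, x j = 1}

/-- The `(n-2)`-skeleton of the boundary of the standard simplex: the union of all
faces of dimension at most `n - 2`, i.e. of all pairwise intersections of facets. -/
def sSkel (n : ℕ) : Set (Euc n) :=
  ⋃ i : Fin (n + 1), ⋃ j : Fin (n + 1), ⋃ _ : i ≠ j, sFacet n i ∩ sFacet n j

/-- The inward integral normal direction of the `i`-th facet of the standard simplex. -/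
def sNormal (n : ℕ) (i : Fin (n + 1)) : Fin n → ℤ :=
  if h : (i : ℕ) < n then Pi.single ⟨i, h⟩ 1 else fun _ => 1

/-- A tropical curve in the interior of the standard simplex is saturated if its closure
avoids the `(n-2)`-skeleton of the boundary and meets the facets perpendicularly:
every edge whose closure meets a facet has weight parallel to the normal of that facet. -/
def Saturated {n : ℕ} (G : TropicalCurve n (interior (stdSimp n))) : Prop :=
  closure G.support ∩ sSkel n = ∅ ∧
  ∀ e ∈ G.edges, ∀ i : Fin (n + 1),
    (closure e.carrier ∩ sFacet n i).Nonempty →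
    ∃ k : ℤ, e.weight = k • sNormal n i

/-- The number of intersection points of the closure of `G` with the `i`-th facet of the
standard simplex, counted with the multiplicities of the corresponding edges. -/
def facetCount {n : ℕ} (G : TropicalCurve n (interior (stdSimp n)))
    (i : Fin (n + 1)) : ℕ :=
  ∑ e ∈ G.edges.filter (fun e => (closure e.carrier ∩ sFacet n i).Nonempty), e.mult

section AuxCover

open Set

lemma euc_add_smul_apply {n : ℕ} (v w : Euc n) (c : ℝ) (i : Fin n) :
    (v + c • w) i = v i + c * w i := rfl

lemma wR_apply {n : ℕ} (e : TropEdge n) (i : Fin n) : e.wR i = (e.weight i : ℝ) := rfl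

lemma wR_ne_zero {n : ℕ} {e : TropEdge n} (h : e.weight ≠ 0) : e.wR ≠ 0 := by
  intro h0
  apply h
  funext i
  have h1 : e.wR i = (0 : Euc n) i := by rw [h0]
  have h2 : (e.weight i : ℝ) = 0 := h1
  exact_mod_cast h2

lemma param_inj {n : ℕ} (v : Euc n) {w : Euc n} (hw : w ≠ 0) {c : ℝ} (hc : c ≠ 0) :
    Function.Injective (fun t : ℝ => v + (t * c) • w) := by
  intro t t' h
  simp only [add_right_inj] at h
  have h3 : (t * c - t' * c) • w = 0 := by rw [sub_smul, h, sub_self]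
  rcases smul_eq_zero.mp h3 with h4 | h5
  · have h6 : t * c = t' * c := by linarith [sub_eq_zero.mp h4]
    exact mul_right_cancel₀ hc h6
  · exact absurd h5 hw

lemma mem_carrier_of_mem_ends {n : ℕ} {U : Set (Euc n)} (G : TropicalCurve n U)
    {e : TropEdge n} (he : e ∈ G.edges) {v : Euc n} (hv : v ∈ e.ends) : v ∈ e.carrier := by
  rcases G.edge_shape e he with
    ⟨a, _, b, _, _, hends, hcar, _, _⟩ | ⟨w, hwv, u, _, T, hT, hends, hcar, _, _⟩
  · rw [hends] at hv
    rw [hcar]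
    rcases Finset.mem_insert.mp hv with h | h
    · rw [h]; exact left_mem_segment ℝ _ _
    · rw [Finset.mem_singleton.mp h]; exact right_mem_segment ℝ _ _
  · rw [hends, Finset.mem_singleton] at hv
    subst hv
    rw [hcar]
    refine ⟨⟨0, le_refl 0, ?_, by simp⟩, G.verts_mem _ hwv⟩
    simpa using hT

lemma no_overlap {n : ℕ} {U : Set (Euc n)} (G : TropicalCurve n U)
    {e f : TropEdge n} (he : e ∈ G.edges) (hf : f ∈ G.edges) (hef : e ≠ f)
    {v : Euc n} {c : ℝ} (hc : c ≠ 0) (hw : e.wR ≠ 0) {δ : ℝ} (hδ : 0 < δ)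
    (hp : ∀ t, 0 < t → t < δ → v + (t * c) • e.wR ∈ e.carrier ∩ f.carrier) : False := by
  have hinj : Set.InjOn (fun t : ℝ => v + (t * c) • e.wR) (Set.Ioo 0 δ) :=
    (param_inj v hw hc).injOn
  have himg : (fun t : ℝ => v + (t * c) • e.wR) '' Set.Ioo 0 δ ⊆ (G.verts : Set (Euc n)) := by
    rintro x ⟨t, ht, rfl⟩
    exact G.edges_meet e he f hf hef _ (hp t ht.1 ht.2)
  have hinf : ((fun t : ℝ => v + (t * c) • e.wR) '' Set.Ioo 0 δ).Infinite :=
    (Set.Ioo_infinite hδ).image hinj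
  exact (hinf.mono himg) (G.verts.finite_toSet)

lemma scalar_key {t εe εf we wf : ℝ} (hb : εf * wf ≠ 0) :
    (t * ((εe * we) / (εf * wf)) * εf) * wf = (t * εe) * we := by
  field_simp
  have := mul_inv_cancel₀ hb
  linear_combination (t * εe * we) * this

lemma ratio_pos {a b : ℝ} (h : 0 < a * b) : 0 < a / b := by
  rcases mul_pos_iff.mp h with ⟨h1, h2⟩ | ⟨h1, h2⟩
  · exact div_pos h1 h2
  · exact div_pos_of_neg_of_neg h1 h2

lemma parallel_overlap {n : ℕ} {U : Set (Euc n)} (G : TropicalCurve n U)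
    {v : Euc n} {e f : TropEdge n} (he : e ∈ G.edges) (hf : f ∈ G.edges) (hef : e ≠ f)
    {i : Fin n} (hesupp : ∀ j, j ≠ i → e.weight j = 0) (hfsupp : ∀ j, j ≠ i → f.weight j = 0)
    {εe εf : ℝ} (hεe : εe ≠ 0) (hwe : e.wR ≠ 0)
    {δe δf : ℝ} (hδe : 0 < δe) (hδf : 0 < δf)
    (hpe : ∀ t, 0 < t → t < δe → v + (t * εe) • e.wR ∈ e.carrier)
    (hpf : ∀ t, 0 < t → t < δf → v + (t * εf) • f.wR ∈ f.carrier)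
    (hsgn : 0 < (εe * (e.weight i : ℝ)) * (εf * (f.weight i : ℝ))) : False := by
  have hb0 : εf * (f.weight i : ℝ) ≠ 0 := by
    intro h; rw [h, mul_zero] at hsgn; exact lt_irrefl 0 hsgn
  have hr : 0 < (εe * (e.weight i : ℝ)) / (εf * (f.weight i : ℝ)) := ratio_pos hsgn
  set r : ℝ := (εe * (e.weight i : ℝ)) / (εf * (f.weight i : ℝ)) with hrdef
  have hδ : 0 < min δe (δf / r) := lt_min hδe (div_pos hδf hr)
  refine no_overlap G he hf hef (v := v) hεe hwe hδ ?_
  intro t ht htδ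
  have h1 : t < δe := lt_of_lt_of_le htδ (min_le_left _ _)
  have h2 : t * r < δf := by
    have h3 : t < δf / r := lt_of_lt_of_le htδ (min_le_right _ _)
    calc t * r < (δf / r) * r := mul_lt_mul_of_pos_right h3 hr
    _ = δf := div_mul_cancel₀ _ (ne_of_gt hr)
  have heq : v + (t * εe) • e.wR = v + ((t * r) * εf) • f.wR := by
    ext j
    rw [euc_add_smul_apply, euc_add_smul_apply, wR_apply, wR_apply]
    by_cases hj : j = i
    · subst hj
      rw [hrdef, scalar_key hb0]
    · rw [hesupp j hj, hfsupp j hj]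
      simp
  exact ⟨hpe t ht h1, by rw [heq]; exact hpf _ (mul_pos ht hr) h2⟩

lemma path_overlap {n : ℕ} {U : Set (Euc n)} (G : TropicalCurve n U)
    {v : Euc n} {e f : TropEdge n} (he : e ∈ G.edges) (hf : f ∈ G.edges) (hef : e ≠ f)
    {i : Fin n} {S : Set (Euc n)} (hS : Set.InjOn (fun x => x i) S)
    (heS : e.carrier ⊆ S) (hfS : f.carrier ⊆ S)
    {εe εf : ℝ} (hεe : εe ≠ 0) (hwe : e.wR ≠ 0)
    {δe δf : ℝ} (hδe : 0 < δe) (hδf : 0 < δf)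
    (hpe : ∀ t, 0 < t → t < δe → v + (t * εe) • e.wR ∈ e.carrier)
    (hpf : ∀ t, 0 < t → t < δf → v + (t * εf) • f.wR ∈ f.carrier)
    (hsgn : 0 < (εe * (e.weight i : ℝ)) * (εf * (f.weight i : ℝ))) : False := by
  have hb0 : εf * (f.weight i : ℝ) ≠ 0 := by
    intro h; rw [h, mul_zero] at hsgn; exact lt_irrefl 0 hsgn
  have hr : 0 < (εe * (e.weight i : ℝ)) / (εf * (f.weight i : ℝ)) := ratio_pos hsgn
  set r : ℝ := (εe * (e.weight i : ℝ)) / (εf * (f.weight i : ℝ)) with hrdef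
  have hδ : 0 < min δe (δf / r) := lt_min hδe (div_pos hδf hr)
  refine no_overlap G he hf hef (v := v) hεe hwe hδ ?_
  intro t ht htδ
  have h1 : t < δe := lt_of_lt_of_le htδ (min_le_left _ _)
  have h2 : t * r < δf := by
    have h3 : t < δf / r := lt_of_lt_of_le htδ (min_le_right _ _)
    calc t * r < (δf / r) * r := mul_lt_mul_of_pos_right h3 hr
    _ = δf := div_mul_cancel₀ _ (ne_of_gt hr)
  have hme : v + (t * εe) • e.wR ∈ e.carrier := hpe t ht h1
  have hmf : v + ((t * r) * εf) • f.wR ∈ f.carrier := hpf _ (mul_pos ht hr) h2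
  have hci : (v + (t * εe) • e.wR) i = (v + ((t * r) * εf) • f.wR) i := by
    rw [euc_add_smul_apply, euc_add_smul_apply, wR_apply, wR_apply, hrdef, scalar_key hb0]
  have heq : v + (t * εe) • e.wR = v + ((t * r) * εf) • f.wR :=
    hS (heS hme) (hfS hmf) hci
  exact ⟨hme, by rw [heq]; exact hmf⟩

lemma sign_pigeonhole {α : Type*} [DecidableEq α] (s : Finset α) (hcard : 3 ≤ s.card)
    (g : α → ℤ) (hg : ∀ a ∈ s, g a ≠ 0) :
    ∃ a ∈ s, ∃ b ∈ s, a ≠ b ∧ 0 < g a * g b := by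
  have hcard2 : (Finset.univ : Finset Bool).card < s.card := by
    rw [Finset.card_univ, Fintype.card_bool]; omega
  obtain ⟨a, ha, b, hb, hab, hsg⟩ := Finset.exists_ne_map_eq_of_card_lt_of_maps_to
    hcard2 (f := fun x => decide (0 < g x)) (fun x _ => Finset.mem_univ _)
  refine ⟨a, ha, b, hb, hab, ?_⟩
  by_cases h : 0 < g a
  · have hb' : 0 < g b := by
      have h2 : decide (0 < g b) = true := by rw [← hsg]; simpa using h
      simpa using h2
    exact mul_pos h hb'
  · have ha' : g a < 0 := lt_of_le_of_ne (not_lt.mp h) (hg a ha)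
    have hbn : ¬ 0 < g b := by
      have h2 : decide (0 < g b) = false := by rw [← hsg]; simpa using h
      simpa using h2
    have hb' : g b < 0 := lt_of_le_of_ne (not_lt.mp hbn) (hg b hb)
    exact mul_pos_of_neg_of_neg ha' hb'

end AuxCover

/-- if for each direction i we are given d paths in a saturated tropical
curve G of degree d (chains of segments of edges with injective projection to the i-th
coordinate) such that every edge with nonzero i-th weight component is traversed by
one of them, then every vertex of G lies in V₀(P_{ik}) for some direction
i ∈ {1, …, n-1} and some k. Each path (i,k) is encoded by nseg i k ≥ 1 segments
between the points pts i k 0, …, pts i k (nseg i k), each open segment being contained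
in an edge of G, with PS i k the union of the closed segments. -/
theorem cover_by_paths (n : ℕ) (hn : 2 ≤ n) (d : ℕ)
    (G : TropicalCurve n (interior (stdSimp n))) (hG : Saturated G)
    (hd : ∀ j : Fin (n + 1), facetCount G j = d)
    (nseg : Fin n → Fin d → ℕ) (pts : Fin n → Fin d → ℕ → Euc n)
    (PS : Fin n → Fin d → Set (Euc n))
    (hPS : ∀ i k, PS i k =
      ⋃ j ∈ Finset.range (nseg i k), segment ℝ (pts i k j) (pts i k (j + 1)))
    (hpath : ∀ i k, 1 ≤ nseg i k ∧ ∀ j < nseg i k,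
      pts i k j ≠ pts i k (j + 1) ∧
      ∃ e ∈ G.edges, openSegment ℝ (pts i k j) (pts i k (j + 1)) ⊆ e.carrier)
    (hinj : ∀ i k, Set.InjOn (fun x => x i) (PS i k))
    (htrav : ∀ i : Fin n, ∀ e ∈ G.edges, e.weight i ≠ 0 →
      ∃ k : Fin d, e.carrier ⊆ PS i k) :
    ∀ v ∈ G.verts, ∃ i : Fin n, (i : ℕ) < n - 1 ∧ ∃ k : Fin d,
      v ∈ PS i k ∧ ∃ e ∈ G.edges, v ∈ e.ends ∧ ¬ e.carrier ⊆ PS i k ∧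
        ∃ j : Fin n, j ≠ i ∧ e.weight j ≠ 0 := by
  intro v hv
  by_contra hcon
  push_neg at hcon
  obtain ⟨ε, hε, -⟩ := G.balanced v hv
  set Ev := G.edges.filter (fun e => v ∈ e.ends) with hEvdef
  have hcard : 3 ≤ Ev.card := G.three_valent v hv
  have hdata : ∀ e ∈ Ev, (ε e ≠ 0) ∧ e.weight ≠ 0 ∧ e.wR ≠ 0 ∧
      ∃ δ, 0 < δ ∧ ∀ t, 0 < t → t < δ → v + (t * ((ε e : ℤ) : ℝ)) • e.wR ∈ e.carrier := by
    intro e he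
    obtain ⟨heG, hev⟩ := Finset.mem_filter.mp he
    obtain ⟨hsgn, δ, hδ, hpt⟩ := hε e heG hev
    refine ⟨by rcases hsgn with h | h <;> simp [h], G.weight_ne e heG,
      wR_ne_zero (G.weight_ne e heG), δ, hδ, fun t ht ht' => hpt t ht ht'⟩
  by_cases hex : ∃ i : Fin n, (i : ℕ) < n - 1 ∧ ∃ e ∈ Ev, e.weight i ≠ 0
  · -- main case
    obtain ⟨i, hi, e0, he0, hw0⟩ := hex
    obtain ⟨he0G, he0v⟩ := Finset.mem_filter.mp he0
    obtain ⟨k0, hk0⟩ := htrav i e0 he0G hw0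
    have hvk0 : v ∈ PS i k0 := hk0 (mem_carrier_of_mem_ends G he0G he0v)
    have hdich : ∀ k, v ∈ PS i k → ∀ e ∈ Ev,
        e.carrier ⊆ PS i k ∨ ∀ j, j ≠ i → e.weight j = 0 := by
      intro k hvk e he
      obtain ⟨heG, hev⟩ := Finset.mem_filter.mp he
      by_cases hc : e.carrier ⊆ PS i k
      · exact Or.inl hc
      · exact Or.inr fun j hj => hcon i hi k hvk e heG hev hc j hj
    have hwi : ∀ e ∈ Ev, e.weight i ≠ 0 := by
      intro e he h0
      obtain ⟨hεne, hwne, hwRne, δ, hδ, hpt⟩ := hdata e he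
      rcases hdich k0 hvk0 e he with hsub | hsupp
      · have h1 : v + ((δ / 3) * ((ε e : ℤ) : ℝ)) • e.wR ∈ e.carrier :=
          hpt _ (by positivity) (by linarith)
        have h2 : v + ((δ / 2) * ((ε e : ℤ) : ℝ)) • e.wR ∈ e.carrier :=
          hpt _ (by positivity) (by linarith)
        have hci : (v + ((δ / 3) * ((ε e : ℤ) : ℝ)) • e.wR) i
            = (v + ((δ / 2) * ((ε e : ℤ) : ℝ)) • e.wR) i := by
          rw [euc_add_smul_apply, euc_add_smul_apply, wR_apply, h0]
          simp
        have heq := hinj i k0 (hsub h1) (hsub h2) hci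
        have := param_inj v hwRne (Int.cast_ne_zero.mpr hεne) heq
        linarith
      · apply hwne
        funext j
        by_cases hj : j = i
        · rw [hj]; exact h0
        · exact hsupp j hj
    obtain ⟨e, he, f, hf, hef, hzpos⟩ := sign_pigeonhole Ev hcard
      (fun e => ε e * e.weight i)
      (fun e he => mul_ne_zero (hdata e he).1 (hwi e he))
    obtain ⟨heG, hev⟩ := Finset.mem_filter.mp he
    obtain ⟨hfG, hfv⟩ := Finset.mem_filter.mp hf
    obtain ⟨ke, hke⟩ := htrav i e heG (hwi e he)
    obtain ⟨kf, hkf⟩ := htrav i f hfG (hwi f hf)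
    obtain ⟨δe, hδe, hpe⟩ := (hdata e he).2.2.2
    obtain ⟨δf, hδf, hpf⟩ := (hdata f hf).2.2.2
    have hεeR : ((ε e : ℤ) : ℝ) ≠ 0 := Int.cast_ne_zero.mpr (hdata e he).1
    have hsgnR : 0 < (((ε e : ℤ) : ℝ) * (e.weight i : ℝ))
        * (((ε f : ℤ) : ℝ) * (f.weight i : ℝ)) := by exact_mod_cast hzpos
    have hvke : v ∈ PS i ke := hke (mem_carrier_of_mem_ends G heG hev)
    have hvkf : v ∈ PS i kf := hkf (mem_carrier_of_mem_ends G hfG hfv)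
    rcases hdich ke hvke f hf with hfsub | hfsupp
    · exact path_overlap G heG hfG hef (hinj i ke) hke hfsub hεeR
        (hdata e he).2.2.1 hδe hδf hpe hpf hsgnR
    · rcases hdich kf hvkf e he with hesub | hesupp
      · exact path_overlap G heG hfG hef (hinj i kf) hesub hkf hεeR
          (hdata e he).2.2.1 hδe hδf hpe hpf hsgnR
      · exact parallel_overlap G heG hfG hef hesupp hfsupp hεeR
          (hdata e he).2.2.1 hδe hδf hpe hpf hsgnR
  · -- all weights concentrated in the last coordinate: impossible
    push_neg at hex
    have hlast : n - 1 < n := by omega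
    set L : Fin n := ⟨n - 1, hlast⟩ with hLdef
    have hsupp : ∀ e ∈ Ev, ∀ j, j ≠ L → e.weight j = 0 := by
      intro e he j hj
      have hjv : (j : ℕ) < n - 1 := by
        have h1 := j.isLt
        have h2 : (j : ℕ) ≠ n - 1 := fun h => hj (Fin.ext h)
        omega
      exact hex j hjv e he
    have hwL : ∀ e ∈ Ev, e.weight L ≠ 0 := by
      intro e he h0
      apply (hdata e he).2.1
      funext j
      by_cases hj : j = L
      · rw [hj]; exact h0
      · exact hsupp e he j hj
    obtain ⟨e, he, f, hf, hef, hzpos⟩ := sign_pigeonhole Ev hcard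
      (fun e => ε e * e.weight L)
      (fun e he => mul_ne_zero (hdata e he).1 (hwL e he))
    obtain ⟨heG, hev⟩ := Finset.mem_filter.mp he
    obtain ⟨hfG, hfv⟩ := Finset.mem_filter.mp hf
    obtain ⟨δe, hδe, hpe⟩ := (hdata e he).2.2.2
    obtain ⟨δf, hδf, hpf⟩ := (hdata f hf).2.2.2
    have hεeR : ((ε e : ℤ) : ℝ) ≠ 0 := Int.cast_ne_zero.mpr (hdata e he).1
    have hsgnR : 0 < (((ε e : ℤ) : ℝ) * (e.weight L : ℝ))
        * (((ε f : ℤ) : ℝ) * (f.weight L : ℝ)) := by exact_mod_cast hzpos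
    exact parallel_overlap G heG hfG hef (hsupp e he) (hsupp f hf) hεeR
      (hdata e he).2.2.1 hδe hδf hpe hpf hsgnR
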